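/- arXiv:2405.00065 — 8 statements merged into one kernel-verified Lean document; each statement's English description precedes it below -/
import Mathlib

section
/- Let f : [0,1]^d → R be differentiable and γ-weakly DR-submodular, meaning ∇f(x) ≥ γ∇f(y) coordinatewise whenever x ≤ y coordinatewise, for some γ ∈ (0,1]. Then f is γ-weakly up-concave: for all x ≤ y in [0,1]^d, γ⟨∇f(y), y−x⟩ ≤ f(y) − f(x) ≤ (1/γ)⟨∇f(x), y−x⟩. -/
open scoped RealInnerProductSpace

/-- The unit box `[0,1]^d` in Euclidean space. -/
def unitBox (d : ℕ) : Set (EuclideanSpace ℝ (Fin d)) :=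
  {x | ∀ i, x i ∈ Set.Icc (0 : ℝ) 1}

/-- Pointwise inner product comparison: if `γ * b i ≤ a i` and `v` is nonneg, then
`γ * ⟪b, v⟫ ≤ ⟪a, v⟫`. -/
lemma inner_le_of_coord {d : ℕ} (γ : ℝ) (a b v : EuclideanSpace ℝ (Fin d))
    (h : ∀ i, γ * b i ≤ a i) (hv : ∀ i, 0 ≤ v i) :
    γ * ⟪b, v⟫ ≤ ⟪a, v⟫ := by
  simp only [PiLp.inner_apply, RCLike.inner_apply, conj_trivial, Finset.mul_sum]
  exact Finset.sum_le_sum fun i _ => by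
    have := mul_le_mul_of_nonneg_right (h i) (hv i)
    nlinarith [this]

/-- If `f : [0,1]^d → ℝ` is differentiable with gradient `g` and `γ`-weakly DR-submodular
(`g x ≥ γ • g y` coordinatewise whenever `x ≤ y` coordinatewise), `γ ∈ (0,1]`, then `f` is
`γ`-weakly up-concave: for all `x ≤ y` in `[0,1]^d`,
`γ⟨∇f(y), y−x⟩ ≤ f(y) − f(x) ≤ (1/γ)⟨∇f(x), y−x⟩`. -/
theorem gammaWeaklyDRSubmodular_is_gammaWeaklyUpConcave
    (d : ℕ) (γ : ℝ) (hγ0 : 0 < γ) (hγ1 : γ ≤ 1)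
    (f : EuclideanSpace ℝ (Fin d) → ℝ)
    (g : EuclideanSpace ℝ (Fin d) → EuclideanSpace ℝ (Fin d))
    (hderiv : ∀ x ∈ unitBox d, HasGradientAt f (g x) x)
    (hDR : ∀ x ∈ unitBox d, ∀ y ∈ unitBox d, (∀ i, x i ≤ y i) → ∀ i, γ * g y i ≤ g x i) :
    ∀ x ∈ unitBox d, ∀ y ∈ unitBox d, (∀ i, x i ≤ y i) →
      γ * ⟪g y, y - x⟫ ≤ f y - f x ∧ f y - f x ≤ (1 / γ) * ⟪g x, y - x⟫ := by
  intro x hx y hy hxy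
  set v : EuclideanSpace ℝ (Fin d) := y - x with hv
  have hvnn : ∀ i, 0 ≤ v i := fun i => by
    simp [hv, sub_nonneg, hxy i]
  -- the path
  set c : ℝ → EuclideanSpace ℝ (Fin d) := fun t => x + t • v with hc
  have hcbox : ∀ t ∈ Set.Icc (0 : ℝ) 1, c t ∈ unitBox d := by
    intro t ht i
    have hxi := hx i
    have hyi := hy i
    have hcval : c t i = x i + t * (y i - x i) := by
      simp [hc, hv]
    constructor
    · rw [hcval]
      nlinarith [ht.1, ht.2, hxi.1, hxi.2, hyi.1, hyi.2, hxy i]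
    · rw [hcval]
      nlinarith [ht.1, ht.2, hxi.1, hxi.2, hyi.1, hyi.2, hxy i]
  have hcle : ∀ t ∈ Set.Icc (0 : ℝ) 1, (∀ i, x i ≤ c t i) ∧ (∀ i, c t i ≤ y i) := by
    intro t ht
    constructor <;> intro i <;>
    · have hcval : c t i = x i + t * (y i - x i) := by simp [hc, hv]
      rw [hcval]; nlinarith [ht.1, ht.2, hxy i]
  -- derivative of f ∘ c
  have hcderiv : ∀ t : ℝ, HasDerivAt c v t := by
    intro t
    have : HasDerivAt (fun t : ℝ => t • v) ((1 : ℝ) • v) t := (hasDerivAt_id t).smul_const v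
    have h2 := this.const_add x
    rw [one_smul] at h2
    exact h2
  have hφ : ∀ t ∈ Set.Icc (0 : ℝ) 1, HasDerivAt (f ∘ c) ⟪g (c t), v⟫ t := by
    intro t ht
    have hg := (hderiv (c t) (hcbox t ht)).hasFDerivAt
    have := hg.comp_hasDerivAt t (hcderiv t)
    simpa using this
  have hcont : ContinuousOn (f ∘ c) (Set.Icc (0:ℝ) 1) :=
    fun t ht => ((hφ t ht).continuousAt).continuousWithinAt
  obtain ⟨t, ht, hslope⟩ := exists_hasDerivAt_eq_slope (f ∘ c) (fun t => ⟪g (c t), v⟫)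
    (by norm_num : (0:ℝ) < 1) hcont
    (fun t ht => hφ t (Set.mem_Icc_of_Ioo ht))
  have ht' : t ∈ Set.Icc (0:ℝ) 1 := Set.mem_Icc_of_Ioo ht
  have hc0 : c 0 = x := by simp [hc]
  have hc1 : c 1 = y := by simp [hc, hv]
  have hfeq : f y - f x = ⟪g (c t), v⟫ := by
    rw [hslope]; simp [Function.comp, hc0, hc1]
  obtain ⟨hle1, hle2⟩ := hcle t ht'
  constructor
  · rw [hfeq]
    exact inner_le_of_coord γ (g (c t)) (g y) v
      (hDR (c t) (hcbox t ht') y hy hle2) hvnn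
  · rw [hfeq]
    have h : γ * ⟪g (c t), v⟫ ≤ ⟪g x, v⟫ :=
      inner_le_of_coord γ (g x) (g (c t)) v (hDR x hx (c t) (hcbox t ht') hle1) hvnn
    have h2 := mul_le_mul_of_nonneg_left h (le_of_lt (one_div_pos.mpr hγ0))
    calc ⟪g (c t), v⟫ = 1 / γ * (γ * ⟪g (c t), v⟫) := by field_simp
      _ ≤ 1 / γ * ⟪g x, v⟫ := h2
end

section
/- Let f : [0,1]^d → R be a non-negative monotone differentiable function that is γ-weakly up-concave with curvature bounded by c ∈ [0,1] and has a μ-strongly γ-weakly up-super-gradient ∇̃f. Then for all x, y ∈ [0,1]^d: (γ²/(1+cγ²)) f(y) − f(x) ≤ (γ/(1+cγ²)) ( ⟨∇̃f(x), y − x⟩ − (μ/2)||y − x||² ). -/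
open scoped RealInnerProductSpace

set_option maxHeartbeats 1600000 in
/-- Lemma 1 (monotone up-concave over general convex sets): if `f : [0,1]^d → ℝ` is
non-negative, monotone, `γ`-weakly up-concave with a `μ`-strongly `γ`-weakly
up-super-gradient `g̃` and curvature bounded by `c`, then for all `x, y ∈ [0,1]^d`,
`(γ²/(1+cγ²)) f(y) − f(x) ≤ (γ/(1+cγ²)) (⟨g̃(x), y−x⟩ − (μ/2)‖y−x‖²)`. -/
theorem monotone_upConcave_quadratizable
    (d : ℕ) (γ μ c : ℝ) (hγ0 : 0 < γ) (hγ1 : γ ≤ 1) (hμ : 0 ≤ μ) (hc0 : 0 ≤ c) (hc1 : c ≤ 1)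
    (f : EuclideanSpace ℝ (Fin d) → ℝ)
    (gt : EuclideanSpace ℝ (Fin d) → EuclideanSpace ℝ (Fin d))
    (hnonneg : ∀ x ∈ unitBox d, 0 ≤ f x)
    (hmono : ∀ x ∈ unitBox d, ∀ y ∈ unitBox d, (∀ i, x i ≤ y i) → f x ≤ f y)
    (hsupergrad : ∀ x ∈ unitBox d, ∀ y ∈ unitBox d, (∀ i, x i ≤ y i) →
      γ * (⟪gt y, y - x⟫ + μ / 2 * ‖y - x‖ ^ 2) ≤ f y - f x ∧
      f y - f x ≤ (1 / γ) * (⟪gt x, y - x⟫ - μ / 2 * ‖y - x‖ ^ 2))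
    (hcurv : ∀ x ∈ unitBox d, ∀ y ∈ unitBox d, ∀ z : EuclideanSpace ℝ (Fin d),
      (∀ i, 0 ≤ z i) → x + z ∈ unitBox d → y + z ∈ unitBox d →
      (1 - c) * (f (x + z) - f x) ≤ f (y + z) - f y) :
    ∀ x ∈ unitBox d, ∀ y ∈ unitBox d,
      γ ^ 2 / (1 + c * γ ^ 2) * f y - f x ≤
        γ / (1 + c * γ ^ 2) * (⟪gt x, y - x⟫ - μ / 2 * ‖y - x‖ ^ 2) := by
  intro x hx y hy
  classical
  set u : EuclideanSpace ℝ (Fin d) := WithLp.toLp 2 (fun i => max (x i) (y i)) with hu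
  set w : EuclideanSpace ℝ (Fin d) := WithLp.toLp 2 (fun i => min (x i) (y i)) with hw
  have hub : u ∈ unitBox d := by
    intro i
    exact ⟨le_max_of_le_left (hx i).1, max_le (hx i).2 (hy i).2⟩
  have hwb : w ∈ unitBox d := by
    intro i
    exact ⟨le_min (hx i).1 (hy i).1, min_le_of_left_le (hx i).2⟩
  have hxu : ∀ i, x i ≤ u i := fun i => le_max_left _ _
  have hwx : ∀ i, w i ≤ x i := fun i => min_le_left _ _
  have hzpos : ∀ i, (0:ℝ) ≤ (x - w) i := by
    intro i
    have : (x - w) i = x i - w i := rfl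
    rw [this]
    linarith [hwx i]
  have hwz : w + (x - w) = x := by abel
  have hyz : y + (x - w) = u := by
    refine PiLp.ext (fun i => ?_)
    have h1 : (y + (x - w)) i = y i + (x i - w i) := rfl
    rw [h1]
    rcases le_total (x i) (y i) with h | h
    · simp [hu, hw, max_eq_right h, min_eq_left h]
    · simp only [hu, hw, max_eq_left h, min_eq_right h]; ring
  have hvec : y - x = (u - x) - (x - w) := by
    have : u = y + (x - w) := hyz.symm
    rw [this]; abel
  -- norm splitting
  have hnorm : ‖y - x‖ ^ 2 = ‖u - x‖ ^ 2 + ‖x - w‖ ^ 2 := by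
    rw [← real_inner_self_eq_norm_sq, ← real_inner_self_eq_norm_sq,
      ← real_inner_self_eq_norm_sq]
    simp only [PiLp.inner_apply, RCLike.inner_apply, conj_trivial, PiLp.sub_apply]
    rw [← Finset.sum_add_distrib]
    apply Finset.sum_congr rfl
    intro i _
    rcases le_total (x i) (y i) with h | h
    · simp only [hu, hw, max_eq_right h, min_eq_left h]; ring
    · simp only [hu, hw, max_eq_left h, min_eq_right h]; ring
  have hinner : ⟪gt x, y - x⟫ = ⟪gt x, u - x⟫ - ⟪gt x, x - w⟫ := by
    rw [hvec, inner_sub_right]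
  -- the three key inequalities
  have h1 := (hsupergrad x hx u hub hxu).2
  have h2 := (hsupergrad w hwb x hx hwx).1
  have h3 := hcurv w hwb y hy (x - w) hzpos (by rw [hwz]; exact hx) (by rw [hyz]; exact hub)
  rw [hwz, hyz] at h3
  have hv0 : 0 ≤ f w := hnonneg w hwb
  have hwxle : f w ≤ f x := hmono w hwb x hx hwx
  -- abbreviations
  set P := ⟪gt x, u - x⟫ with hP
  set Q := ⟪gt x, x - w⟫ with hQ
  set s := ‖u - x‖ ^ 2 with hs
  set t := ‖x - w‖ ^ 2 with ht
  -- from h1: γ (f u - f x) ≤ P - μ/2 s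
  have h1' : γ * (f u - f x) ≤ P - μ / 2 * s := by
    have := mul_le_mul_of_nonneg_left h1 (le_of_lt hγ0)
    rw [← mul_assoc] at this
    rw [mul_one_div, div_self (ne_of_gt hγ0), one_mul] at this
    linarith
  -- from h2: γ Q ≤ f x - f w - γ μ/2 t
  have h2' : γ * Q ≤ f x - f w - γ * (μ / 2 * t) := by nlinarith
  have hD : 0 < 1 + c * γ ^ 2 := by positivity
  -- main chain, after multiplying target by (1 + c γ²)/γ... do it via div_le_div
  rw [hinner, hnorm]
  have hγsq : γ ^ 2 ≤ 1 := by nlinarith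
  have h1c : 0 ≤ 1 - (1 - c) * γ ^ 2 := by nlinarith [mul_nonneg hc0 (sq_nonneg γ)]
  have key : γ ^ 2 * f y - (1 + c * γ ^ 2) * f x ≤ γ * (P - Q - μ / 2 * (s + t)) := by
    have A := mul_le_mul_of_nonneg_left h1' (le_of_lt hγ0)
    have C := mul_le_mul_of_nonneg_left h3 (sq_nonneg γ)
    have D := mul_nonneg hv0 h1c
    ring_nf at A C D h2' ⊢
    linarith [A, C, D, h2']
  rw [div_mul_eq_mul_div, div_mul_eq_mul_div, sub_le_iff_le_add, div_le_iff₀ hD,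
    add_mul, div_mul_cancel₀ _ hD.ne']
  nlinarith [key, hnonneg x hx]
end

section
/- Let f : [0,1]^d → R be a non-negative monotone function with curvature bounded by c ∈ [0,1] and γ ∈ (0,1]. Then for all x, y ∈ [0,1]^d: (f(x∨y) − f(x)) + (1/γ²)(f(x∧y) − f(x)) ≥ f(y) − (c + 1/γ²) f(x). -/
/-- The curvature-based inequality: for a non-negative monotone `f : [0,1]^d → ℝ` with
curvature bounded by `c ∈ [0,1]` and `γ ∈ (0,1]`,
`(f(x∨y) − f(x)) + (1/γ²)(f(x∧y) − f(x)) ≥ f(y) − (c + 1/γ²) f(x)`. -/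
theorem curvature_sup_inf_inequality
    (d : ℕ) (γ c : ℝ) (hγ0 : 0 < γ) (hγ1 : γ ≤ 1) (hc0 : 0 ≤ c) (hc1 : c ≤ 1)
    (f : (Fin d → ℝ) → ℝ)
    (hnonneg : ∀ x ∈ Set.Icc (0 : Fin d → ℝ) 1, 0 ≤ f x)
    (hmono : ∀ x ∈ Set.Icc (0 : Fin d → ℝ) 1, ∀ y ∈ Set.Icc (0 : Fin d → ℝ) 1,
      x ≤ y → f x ≤ f y)
    (hcurv : ∀ x ∈ Set.Icc (0 : Fin d → ℝ) 1, ∀ y ∈ Set.Icc (0 : Fin d → ℝ) 1,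
      ∀ z : Fin d → ℝ, 0 ≤ z → x + z ∈ Set.Icc (0 : Fin d → ℝ) 1 →
        y + z ∈ Set.Icc (0 : Fin d → ℝ) 1 →
        (1 - c) * (f (x + z) - f x) ≤ f (y + z) - f y) :
    ∀ x ∈ Set.Icc (0 : Fin d → ℝ) 1, ∀ y ∈ Set.Icc (0 : Fin d → ℝ) 1,
      f y - (c + 1 / γ ^ 2) * f x ≤
        (f (x ⊔ y) - f x) + (1 / γ ^ 2) * (f (x ⊓ y) - f x) := by
  intro x hx y hy
  obtain ⟨hx0, hx1⟩ := hx
  obtain ⟨hy0, hy1⟩ := hy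
  have hinf : x ⊓ y ∈ Set.Icc (0 : Fin d → ℝ) 1 :=
    ⟨le_inf hx0 hy0, inf_le_left.trans hx1⟩
  have hsup : x ⊔ y ∈ Set.Icc (0 : Fin d → ℝ) 1 :=
    ⟨hx0.trans le_sup_left, sup_le hx1 hy1⟩
  set z : Fin d → ℝ := x - x ⊓ y with hz
  have hz0 : (0 : Fin d → ℝ) ≤ z := by
    intro i
    simp [hz]
  have h1 : x ⊓ y + z = x := by
    funext i; simp [hz]
  have h2 : y + z = x ⊔ y := by
    funext i
    simp only [hz, Pi.add_apply, Pi.sub_apply, Pi.inf_apply, Pi.sup_apply]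
    rcases le_total (x i) (y i) with h | h <;>
      simp [min_eq_left, min_eq_right, max_eq_left, max_eq_right, h] <;>
      ring
  have hcur := hcurv (x ⊓ y) hinf y ⟨hy0, hy1⟩ z hz0 (by rw [h1]; exact ⟨hx0, hx1⟩)
    (by rw [h2]; exact hsup)
  rw [h1, h2] at hcur
  -- hcur : (1 - c) * (f x - f (x ⊓ y)) ≤ f (x ⊔ y) - f y
  have hγ2 : (1 : ℝ) ≤ 1 / γ ^ 2 := by
    rw [le_div_iff₀ (by positivity)]
    nlinarith
  have hfinf : 0 ≤ f (x ⊓ y) := hnonneg _ hinf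
  nlinarith [mul_le_mul_of_nonneg_right (sub_nonneg.mpr hγ2) hfinf]
end

section
/- Let f : [0,1]^d → R be a continuously differentiable non-negative γ-weakly up-concave function with γ ∈ (0,1]. Then for any x, y ∈ [0,1]^d, f(x ∨ y) ≥ (1 − γ ||x||_∞) f(y). -/
open scoped RealInnerProductSpace

/-- Coordinatewise maximum of two vectors in Euclidean space. -/
noncomputable def vecSup {d : ℕ} (x y : EuclideanSpace ℝ (Fin d)) : EuclideanSpace ℝ (Fin d) :=
  WithLp.toLp 2 (fun i => max (x i) (y i))

/-- The sup norm `‖x‖_∞ = max_i |x_i|`. -/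
noncomputable def supNorm {d : ℕ} (x : EuclideanSpace ℝ (Fin d)) : ℝ :=
  ⨆ i, |x i|

set_option maxHeartbeats 1000000 in
/-- For a continuously differentiable non-negative `γ`-weakly up-concave function
`f : [0,1]^d → ℝ` with `γ ∈ (0,1]`, and any `x, y ∈ [0,1]^d`,
`f(x ∨ y) ≥ (1 − γ‖x‖_∞) f(y)`. -/
theorem f_join_lower_bound
    (d : ℕ) (γ : ℝ) (hγ0 : 0 < γ) (hγ1 : γ ≤ 1)
    (f : EuclideanSpace ℝ (Fin d) → ℝ)
    (g : EuclideanSpace ℝ (Fin d) → EuclideanSpace ℝ (Fin d))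
    (hderiv : ∀ x ∈ unitBox d, HasGradientAt f (g x) x)
    (hcont : Continuous g)
    (hnonneg : ∀ x ∈ unitBox d, 0 ≤ f x)
    (hupconcave : ∀ u ∈ unitBox d, ∀ v ∈ unitBox d, (∀ i, u i ≤ v i) →
      γ * ⟪g v, v - u⟫ ≤ f v - f u ∧ f v - f u ≤ (1 / γ) * ⟪g u, v - u⟫) :
    ∀ x ∈ unitBox d, ∀ y ∈ unitBox d,
      (1 - γ * supNorm x) * f y ≤ f (vecSup x y) := by
  intro x hx y hy
  set z : EuclideanSpace ℝ (Fin d) := vecSup x y with hzdef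
  have hyz : ∀ i, y i ≤ z i := fun i => le_max_right _ _
  have hzbox : z ∈ unitBox d := fun i =>
    ⟨le_trans (hy i).1 (hyz i), max_le (hx i).2 (hy i).2⟩
  set s : ℝ := supNorm x with hsdef
  have hxs : ∀ i, x i ≤ s :=
    fun i => le_trans (le_abs_self _)
      (le_ciSup (f := fun i => |x i|) ((Set.finite_range _).bddAbove) i)
  have hs0 : 0 ≤ s := Real.iSup_nonneg (fun i => abs_nonneg _)
  have hs1 : s ≤ 1 :=
    Real.iSup_le (fun i => abs_le.mpr ⟨by linarith [(hx i).1], (hx i).2⟩) zero_le_one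
  have hfz : 0 ≤ f z := hnonneg z hzbox
  have hfy : 0 ≤ f y := hnonneg y hy
  rcases lt_or_eq_of_le hγ1 with hγlt | hγeq
  · -- γ < 1 : show f y ≤ f z by a geometric chaining argument
    set p : ℕ → EuclideanSpace ℝ (Fin d) :=
      fun n => y + (1 - (2:ℝ)⁻¹ ^ n) • (z - y) with hpdef
    have hpcoord : ∀ n i, p n i = y i + (1 - (2:ℝ)⁻¹ ^ n) * (z i - y i) := by
      intro n i
      simp [hpdef, PiLp.add_apply, PiLp.smul_apply, PiLp.sub_apply, smul_eq_mul]
    have hc0 : ∀ n : ℕ, (0:ℝ) < (2:ℝ)⁻¹ ^ n := fun n => pow_pos (by norm_num) n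
    have hc1 : ∀ n : ℕ, (2:ℝ)⁻¹ ^ n ≤ 1 := by
      intro n
      calc (2:ℝ)⁻¹ ^ n ≤ 1 ^ n := pow_le_pow_left₀ (by norm_num) (by norm_num) n
        _ = 1 := one_pow n
    have hpbox : ∀ n, p n ∈ unitBox d := by
      intro n i
      have h1 := (hy i).1
      have h2 := (hzbox i).2
      have h3 := hyz i
      rw [Set.mem_Icc, hpcoord]
      constructor <;> nlinarith [hc0 n, hc1 n]
    have hple : ∀ n, ∀ i, p n i ≤ p (n+1) i := by
      intro n i
      rw [hpcoord, hpcoord]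
      have hcc : (2:ℝ)⁻¹ ^ (n+1) ≤ (2:ℝ)⁻¹ ^ n := by
        rw [pow_succ]; nlinarith [hc0 n]
      nlinarith [hyz i]
    have hpz : ∀ n, ∀ i, p n i ≤ z i := by
      intro n i
      rw [hpcoord]
      nlinarith [hyz i, hc0 n, hc1 n]
    have hdiff1 : ∀ n, p (n+1) - p n = ((2:ℝ)⁻¹ ^ (n+1)) • (z - y) := by
      intro n; simp only [hpdef]; module
    have hdiff2 : ∀ n, z - p n = ((2:ℝ)⁻¹ ^ n) • (z - y) := by
      intro n; simp only [hpdef]; module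
    set K : ℝ := ⟪g z, z - y⟫ with hKdef
    have hB : ∀ n, γ * ((2:ℝ)⁻¹ ^ n * K) ≤ f z - f (p n) := by
      intro n
      have h := (hupconcave (p n) (hpbox n) z hzbox (hpz n)).1
      rwa [hdiff2 n, real_inner_smul_right] at h
    have hA : ∀ n, (1 + γ^2) * (f z - f (p (n+1))) ≤ f z - f (p n) := by
      intro n
      have hL := (hupconcave (p n) (hpbox n) (p (n+1)) (hpbox (n+1)) (hple n)).1
      have hR := (hupconcave (p (n+1)) (hpbox (n+1)) z hzbox (hpz (n+1))).2
      rw [hdiff1 n, real_inner_smul_right] at hL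
      rw [hdiff2 (n+1), real_inner_smul_right] at hR
      set J : ℝ := ⟪g (p (n+1)), z - y⟫ with hJdef
      have h1 : γ * (f z - f (p (n+1))) ≤ (2:ℝ)⁻¹ ^ (n+1) * J := by
        have h := mul_le_mul_of_nonneg_left hR hγ0.le
        have he : γ * (1 / γ * ((2:ℝ)⁻¹ ^ (n+1) * J)) = (2:ℝ)⁻¹ ^ (n+1) * J := by
          field_simp
        linarith [he ▸ h]
      have h2 : γ * (γ * (f z - f (p (n+1)))) ≤ f (p (n+1)) - f (p n) :=
        le_trans (mul_le_mul_of_nonneg_left h1 hγ0.le) hL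
      nlinarith [h2]
    have hchain : ∀ n, (1 + γ^2)^n * (f z - f (p n)) ≤ f z - f (p 0) := by
      intro n
      induction n with
      | zero => simp
      | succ n ih =>
        have hpos : (0:ℝ) ≤ (1 + γ^2)^n := by positivity
        calc (1 + γ^2)^(n+1) * (f z - f (p (n+1)))
            = (1 + γ^2)^n * ((1 + γ^2) * (f z - f (p (n+1)))) := by ring
          _ ≤ (1 + γ^2)^n * (f z - f (p n)) :=
              mul_le_mul_of_nonneg_left (hA n) hpos
          _ ≤ f z - f (p 0) := ih
    have hp0 : p 0 = y := by simp [hpdef]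
    have hbound : ∀ n : ℕ, γ * K * (((1 + γ^2)/2)^n) ≤ f z - f y := by
      intro n
      have hpos : (0:ℝ) ≤ (1 + γ^2)^n := by positivity
      have h1 := mul_le_mul_of_nonneg_left (hB n) hpos
      have he : (1 + γ^2)^n * (γ * ((2:ℝ)⁻¹ ^ n * K)) = γ * K * (((1 + γ^2)/2)^n) := by
        rw [div_pow, inv_pow]
        field_simp
      rw [he] at h1
      calc γ * K * (((1 + γ^2)/2)^n) ≤ (1 + γ^2)^n * (f z - f (p n)) := h1
        _ ≤ f z - f (p 0) := hchain n
        _ = f z - f y := by rw [hp0]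
    have hq0 : (0:ℝ) ≤ (1 + γ^2)/2 := by positivity
    have hq1 : (1 + γ^2)/2 < 1 := by nlinarith
    have htend : Filter.Tendsto (fun n : ℕ => γ * K * ((1 + γ^2)/2)^n)
        Filter.atTop (nhds 0) := by
      have := tendsto_pow_atTop_nhds_zero_of_lt_one hq0 hq1
      simpa using this.const_mul (γ * K)
    have hmono : f y ≤ f z := by
      have := le_of_tendsto' htend hbound
      linarith
    have hprod : 0 ≤ γ * s * f y := mul_nonneg (mul_nonneg hγ0.le hs0) hfy
    linarith [hprod, hmono]
  · -- γ = 1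
    subst hγeq
    rcases lt_or_eq_of_le hs1 with hslt | hseq
    · rcases eq_or_lt_of_le hs0 with hs0' | hs0'
      · -- s = 0 : x = 0, z = y
        have hzy : z = y := by
          ext i
          have hxi : x i = 0 := le_antisymm (by rw [← hs0'] at hxs; exact hxs i) (hx i).1
          show max (x i) (y i) = y i
          rw [hxi]
          exact max_eq_right (hy i).1
        rw [hzy, ← hs0']
        norm_num
      · -- 0 < s < 1
        set r : ℝ := (1 - s)/s with hrdef
        have hr0 : 0 ≤ r := div_nonneg (by linarith) hs0'.le
        have hsne : s ≠ 0 := ne_of_gt hs0'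
        have hrs : s * r = 1 - s := by rw [hrdef]; field_simp
        set w : EuclideanSpace ℝ (Fin d) := z + r • (z - y) with hwdef
        have hwcoord : ∀ i, w i = z i + r * (z i - y i) := by
          intro i
          simp [hwdef, PiLp.add_apply, PiLp.smul_apply, PiLp.sub_apply, smul_eq_mul]
        have hzys : ∀ i, z i - y i ≤ s * (1 - y i) := by
          intro i
          rcases le_total (x i) (y i) with h | h
          · have hzi : z i = y i := max_eq_right h
            have hnn : 0 ≤ s * (1 - y i) :=
              mul_nonneg hs0'.le (by linarith [(hy i).2])
            rw [hzi]
            linarith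
          · have hzi : z i = x i := max_eq_left h
            have hnn : 0 ≤ y i * (1 - s) :=
              mul_nonneg (hy i).1 (by linarith)
            rw [hzi]
            nlinarith [hxs i]
        have hwbox : w ∈ unitBox d := by
          intro i
          rw [hwcoord]
          constructor
          · have := mul_nonneg hr0 (sub_nonneg.mpr (hyz i))
            linarith [(hzbox i).1]
          · have key : s * (z i + r * (z i - y i)) ≤ s * 1 := by
              have heq : s * (z i + r * (z i - y i))
                  = s * z i + (s * r) * (z i - y i) := by ring
              rw [heq, hrs]
              have h1 := hzys i
              nlinarith
            exact le_of_mul_le_mul_left key hs0'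
        have hzw : ∀ i, z i ≤ w i := by
          intro i
          rw [hwcoord]
          have := mul_nonneg hr0 (sub_nonneg.mpr (hyz i))
          linarith
        have happ1 := (hupconcave y hy z hzbox hyz).1
        have happ2 := (hupconcave z hzbox w hwbox hzw).2
        have hwz : w - z = r • (z - y) := by
          simp only [hwdef]; module
        rw [hwz, real_inner_smul_right] at happ2
        have hfw : 0 ≤ f w := hnonneg w hwbox
        -- happ1 : 1 * ⟪g z, z - y⟫ ≤ f z - f y
        -- happ2 : f w - f z ≤ 1/1 * (r * ⟪g z, z - y⟫)
        set K : ℝ := ⟪g z, z - y⟫ with hKdef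
        have h1 : K ≤ f z - f y := by linarith [happ1]
        have h2 : - f z ≤ r * K := by
          have : (1:ℝ)/1 * (r * K) = r * K := by norm_num
          linarith [this ▸ happ2]
        have h3 : - (s * f z) ≤ (1 - s) * K := by
          have := mul_le_mul_of_nonneg_left h2 hs0'.le
          calc -(s * f z) = s * (- f z) := by ring
            _ ≤ s * (r * K) := this
            _ = (s * r) * K := by ring
            _ = (1 - s) * K := by rw [hrs]
        have h4 : (1 - s) * K ≤ (1 - s) * (f z - f y) :=
          mul_le_mul_of_nonneg_left h1 (by linarith)
        nlinarith [h3, h4]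
    · -- s = 1
      rw [hseq]
      norm_num
      exact hfz
end

section
/- Let f : [0,1]^d → R be non-negative, differentiable, up-concave, and fix a base point u ∈ [0,1]^d. For z ∈ [0,1] write x_z = (z/2)·(x − u) + u. Then for all x, y ∈ [0,1]^d and z ∈ [0,1]: f(x_z ∨ y) ≥ (1 − z/2)(1 − ||u||_∞) f(y). -/
open scoped RealInnerProductSpace

/-- For `f : [0,1]^d → ℝ` non-negative, differentiable and up-concave, base point
`u ∈ [0,1]^d`, and `x_z = (z/2)·(x − u) + u`: for all `x, y ∈ [0,1]^d` and `z ∈ [0,1]`,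
`f(x_z ∨ y) ≥ (1 − z/2)(1 − ‖u‖_∞) f(y)`. -/
theorem f_join_lower_bound_shifted
    (d : ℕ)
    (f : EuclideanSpace ℝ (Fin d) → ℝ)
    (g : EuclideanSpace ℝ (Fin d) → EuclideanSpace ℝ (Fin d))
    (hderiv : ∀ x ∈ unitBox d, HasGradientAt f (g x) x)
    (hnonneg : ∀ x ∈ unitBox d, 0 ≤ f x)
    (hupconcave : ∀ a ∈ unitBox d, ∀ b ∈ unitBox d, (∀ i, a i ≤ b i) →
      ⟪g b, b - a⟫ ≤ f b - f a ∧ f b - f a ≤ ⟪g a, b - a⟫)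
    (u : EuclideanSpace ℝ (Fin d)) (hu : u ∈ unitBox d) :
    ∀ x ∈ unitBox d, ∀ y ∈ unitBox d, ∀ z ∈ Set.Icc (0 : ℝ) 1,
      (1 - z / 2) * (1 - supNorm u) * f y ≤ f (vecSup ((z / 2) • (x - u) + u) y) := by
  have hbox_sup : ∀ v ∈ unitBox d, ∀ y ∈ unitBox d, vecSup v y ∈ unitBox d := by
    intro v hv y hy i
    rw [show (vecSup v y) i = max (v i) (y i) from rfl]
    exact ⟨le_max_of_le_left (hv i).1, max_le (hv i).2 (hy i).2⟩
  have hsup_nonneg : ∀ v : EuclideanSpace ℝ (Fin d), 0 ≤ supNorm v := fun v =>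
    Real.iSup_nonneg fun i => abs_nonneg _
  have hle_sup : ∀ (v : EuclideanSpace ℝ (Fin d)) (i : Fin d), v i ≤ supNorm v := by
    intro v i
    have h : |v i| ≤ ⨆ j, |v j| :=
      le_ciSup (f := fun j => |v j|) (Set.Finite.bddAbove (Set.finite_range _)) i
    exact (le_abs_self _).trans h
  -- key lemma : f (v ∨ y) ≥ (1 - ‖v‖_∞) f y
  have key : ∀ v ∈ unitBox d, ∀ y ∈ unitBox d, (1 - supNorm v) * f y ≤ f (vecSup v y) := by
    intro v hv y hy
    set m := supNorm v with hmdef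
    have hm0 : 0 ≤ m := hsup_nonneg v
    have hm1 : m ≤ 1 := Real.iSup_le
      (fun i => abs_le.2 ⟨by linarith [(hv i).1], (hv i).2⟩) one_pos.le
    rcases eq_or_lt_of_le hm1 with h1 | h1
    · have hfw := hnonneg _ (hbox_sup v hv y hy)
      have : (1 - m) * f y = 0 := by rw [h1]; ring
      linarith
    rcases eq_or_lt_of_le hm0 with h0 | h0
    · -- m = 0 : v = 0, so vecSup v y = y
      have hvy : vecSup v y = y := by
        ext i
        rw [show (vecSup v y) i = max (v i) (y i) from rfl]
        exact max_eq_right ((hle_sup v i).trans (by rw [← hmdef, ← h0]; exact (hy i).1))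
      rw [hvy, ← h0]
      linarith [hnonneg y hy]
    · set w := vecSup v y with hwdef
      have hw : w ∈ unitBox d := hbox_sup v hv y hy
      set p : EuclideanSpace ℝ (Fin d) := y + (1/m) • (w - y) with hpdef
      have hpi : ∀ i, p i = y i + (1/m) * (w i - y i) := by
        intro i
        simp [hpdef, PiLp.add_apply, PiLp.smul_apply, PiLp.sub_apply, smul_eq_mul]
      have hwy : ∀ i, y i ≤ w i := fun i => (le_max_right (v i) (y i)).trans_eq rfl
      have hei : ∀ i, w i - y i ≤ m * (1 - y i) := by
        intro i
        have hwi : w i = max (v i) (y i) := rfl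
        rcases le_total (v i) (y i) with h | h
        · rw [hwi, max_eq_right h]
          nlinarith [(hy i).2]
        · rw [hwi, max_eq_left h]
          have hvm := hle_sup v i
          nlinarith [(hy i).1, (hy i).2]
      have hwy0 : ∀ i, 0 ≤ w i - y i := fun i => by linarith [hwy i]
      have hpbox : p ∈ unitBox d := by
        intro i
        have h1i := hei i
        have h2i := hwy0 i
        constructor
        · rw [hpi i]
          have : 0 ≤ (1/m) * (w i - y i) := by positivity
          linarith [(hy i).1]
        · rw [hpi i]
          have hmul := mul_le_mul_of_nonneg_left h1i (le_of_lt (by positivity : (0:ℝ) < 1/m))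
          have hcanc : (1/m) * (m * (1 - y i)) = 1 - y i := by
            field_simp
          rw [hcanc] at hmul
          linarith
      have h1m : 1 ≤ 1/m := by rw [le_div_iff₀ h0]; linarith
      have hwp : ∀ i, w i ≤ p i := by
        intro i
        rw [hpi i]
        nlinarith [mul_nonneg (by linarith : (0:ℝ) ≤ 1/m - 1) (hwy0 i)]
      have hc1 := (hupconcave y hy w hw hwy).1
      have hc2 := (hupconcave w hw p hpbox hwp).2
      have hpw : p - w = (1/m - 1) • (w - y) := by
        rw [hpdef, hwdef]
        module
      rw [hpw, real_inner_smul_right] at hc2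
      have hfp : 0 ≤ f p := hnonneg p hpbox
      -- bound (1-m) * ⟪g w, w - y⟫ from below
      have hmc : m * (1/m - 1) = 1 - m := by field_simp
      have hI : -(m * f w) ≤ (1 - m) * ⟪g w, w - y⟫ := by
        have h := mul_le_mul_of_nonneg_left hc2 hm0
        rw [show m * ((1/m - 1) * ⟪g w, w - y⟫) = (m * (1/m - 1)) * ⟪g w, w - y⟫ by ring,
          hmc] at h
        nlinarith [mul_nonneg hm0 hfp]
      have h2 := mul_le_mul_of_nonneg_left hc1 (by linarith : (0:ℝ) ≤ 1 - m)
      nlinarith [h2, hI]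
  -- main argument
  intro x hx y hy z hz
  obtain ⟨hz0, hz1⟩ := hz
  set v : EuclideanSpace ℝ (Fin d) := (z / 2) • (x - u) + u with hvdef
  have hvi : ∀ i, v i = (z/2) * (x i - u i) + u i := by
    intro i
    simp [hvdef, PiLp.add_apply, PiLp.smul_apply, PiLp.sub_apply, smul_eq_mul]
  have hvbox : v ∈ unitBox d := by
    intro i
    rw [hvi i]
    constructor
    · nlinarith [(hx i).1, (hu i).1]
    · nlinarith [(hx i).2, (hu i).2, (hx i).1, (hu i).1]
  have hsupu : supNorm u ≤ 1 := Real.iSup_le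
    (fun i => abs_le.2 ⟨by linarith [(hu i).1], (hu i).2⟩) one_pos.le
  have hsupv : supNorm v ≤ z/2 + (1 - z/2) * supNorm u := by
    apply Real.iSup_le
    · intro i
      have hvin := hvbox i
      rw [abs_of_nonneg hvin.1, hvi i]
      have hus := hle_sup u i
      nlinarith [(hx i).2, (hx i).1, (hu i).1]
    · nlinarith [hsup_nonneg u]
  have hkey := key v hvbox y hy
  have hfy := hnonneg y hy
  calc (1 - z / 2) * (1 - supNorm u) * f y ≤ (1 - supNorm v) * f y := by
        nlinarith [hsup_nonneg u]
    _ ≤ f (vecSup v y) := hkey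
end

section
/- Let f : [0,1]^d → R be non-negative, differentiable and up-concave, u ∈ [0,1]^d, and define F(x) = ∫₀¹ [2/(3z(1−z/2)³)] ( f((z/2)·(x−u) + u) − f(u) ) dz. Then for all x, y ∈ [0,1]^d: ((1 − ||u||_∞)/4) f(y) − f((x+u)/2) ≤ (3/8) ⟨∇F(x), y − x⟩. -/
open scoped RealInnerProductSpace

variable {d : ℕ}

/-- Directional derivative bound at box points. -/
lemma grad_coord_bound {M₁ : ℝ} (f : EuclideanSpace ℝ (Fin d) → ℝ)
    (gp p : EuclideanSpace ℝ (Fin d)) (hp : p ∈ unitBox d) (hg : HasGradientAt f gp p)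
    (hLip : ∀ a ∈ unitBox d, ∀ b ∈ unitBox d, |f a - f b| ≤ M₁ * ‖a - b‖) (i : Fin d) :
    |gp i| ≤ M₁ := by
  set e : EuclideanSpace ℝ (Fin d) := EuclideanSpace.single i 1 with he
  have hD : HasDerivAt (fun t : ℝ => f (p + t • e)) ⟪gp, e⟫ 0 := by
    have h1 : HasDerivAt (fun t : ℝ => p + t • e) e 0 := by
      simpa using ((hasDerivAt_id (0:ℝ)).smul_const e).const_add p
    have h2 : HasFDerivAt f ((InnerProductSpace.toDual ℝ (EuclideanSpace ℝ (Fin d))) gp)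
        (p + (0:ℝ) • e) := by simpa using hg.hasFDerivAt
    have h3 := h2.comp_hasDerivAt 0 h1
    simp only [Function.comp_def, InnerProductSpace.toDual_apply_apply] at h3
    exact h3
  have hgpi : ⟪gp, e⟫ = gp i := by simp [he, EuclideanSpace.inner_single_right]
  have hmem : ∀ t : ℝ, 0 ≤ p i + t → p i + t ≤ 1 → (p + t • e) ∈ unitBox d := by
    intro t h0 h1 j
    have : (p + t • e) j = p j + t * (if j = i then 1 else 0) := by
      simp [he, PiLp.add_apply, PiLp.smul_apply, EuclideanSpace.single_apply]
    rw [this]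
    by_cases hij : j = i
    · subst hij; simpa using ⟨h0, h1⟩
    · simpa [hij] using hp j
  have hbnd : ∀ t : ℝ, 0 ≤ p i + t → p i + t ≤ 1 → t ≠ 0 →
      |f (p + t • e) - f p| / |t| ≤ M₁ := by
    intro t h0 h1 ht
    have hmem' := hmem t h0 h1
    have := hLip _ hmem' _ hp
    have hnorm : ‖(p + t • e) - p‖ = |t| := by
      have : (p + t • e) - p = t • e := by abel
      rw [this, norm_smul]
      simp [he, Real.norm_eq_abs]
    rw [hnorm] at this
    rw [div_le_iff₀ (abs_pos.mpr ht)]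
    linarith [this]
  -- slope tends to gp i
  have hslope := hasDerivAt_iff_tendsto_slope.mp hD
  have hPi := hp i
  have habs : ∀ t : ℝ, t ≠ 0 → 0 ≤ p i + t → p i + t ≤ 1 →
      |slope (fun t : ℝ => f (p + t • e)) 0 t| ≤ M₁ := by
    intro t ht h0 h1
    have : slope (fun t : ℝ => f (p + t • e)) 0 t
        = (f (p + t • e) - f (p + (0:ℝ) • e)) / (t - 0) := slope_def_field _ _ _
    rw [this]
    simp only [zero_smul, add_zero, sub_zero]
    rw [abs_div]
    exact hbnd t h0 h1 ht
  rcases lt_or_ge (p i) 1 with hlt | hge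
  · have hsub : Set.Ioi (0:ℝ) ⊆ {(0:ℝ)}ᶜ := fun t ht => by
      simp only [Set.mem_compl_iff, Set.mem_singleton_iff]; exact ne_of_gt ht
    have hT : Filter.Tendsto (fun t => |slope (fun t : ℝ => f (p + t • e)) 0 t|)
        (nhdsWithin 0 (Set.Ioi 0)) (nhds |⟪gp, e⟫|) :=
      (hslope.mono_left (nhdsWithin_mono _ hsub)).abs
    have hev : ∀ᶠ t in nhdsWithin 0 (Set.Ioi 0),
        |slope (fun t : ℝ => f (p + t • e)) 0 t| ≤ M₁ := by
      have hIoo : Set.Ioo (0:ℝ) (1 - p i) ∈ nhdsWithin 0 (Set.Ioi 0) :=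
        Ioo_mem_nhdsGT_of_mem (Set.mem_Ico.mpr ⟨le_refl _, by linarith⟩)
      filter_upwards [hIoo] with t ht
      exact habs t (ne_of_gt ht.1) (by linarith [hPi.1, ht.1.le]) (by linarith [ht.2.le])
    have := le_of_tendsto hT hev
    rwa [hgpi] at this
  · have h0lt : 0 < p i := lt_of_lt_of_le one_pos hge
    have hsub : Set.Iio (0:ℝ) ⊆ {(0:ℝ)}ᶜ := fun t ht => by
      simp only [Set.mem_compl_iff, Set.mem_singleton_iff]; exact ne_of_lt ht
    have hT : Filter.Tendsto (fun t => |slope (fun t : ℝ => f (p + t • e)) 0 t|)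
        (nhdsWithin 0 (Set.Iio 0)) (nhds |⟪gp, e⟫|) :=
      (hslope.mono_left (nhdsWithin_mono _ hsub)).abs
    have hev : ∀ᶠ t in nhdsWithin 0 (Set.Iio 0),
        |slope (fun t : ℝ => f (p + t • e)) 0 t| ≤ M₁ := by
      have hIoo : Set.Ioo (-(p i)) (0:ℝ) ∈ nhdsWithin 0 (Set.Iio 0) :=
        Ioo_mem_nhdsLT_of_mem (Set.mem_Ioc.mpr ⟨by linarith, le_refl _⟩)
      filter_upwards [hIoo] with t ht
      exact habs t (ne_of_lt ht.2) (by linarith [ht.1.le]) (by linarith [hPi.2, ht.2.le])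
    have := le_of_tendsto hT hev
    rwa [hgpi] at this

lemma grad_norm_bound {M₁ : ℝ} (hM : 0 ≤ M₁) (f : EuclideanSpace ℝ (Fin d) → ℝ)
    (gp p : EuclideanSpace ℝ (Fin d)) (hp : p ∈ unitBox d) (hg : HasGradientAt f gp p)
    (hLip : ∀ a ∈ unitBox d, ∀ b ∈ unitBox d, |f a - f b| ≤ M₁ * ‖a - b‖) :
    ‖gp‖ ≤ M₁ * Real.sqrt d := by
  have h1 : ‖gp‖ = Real.sqrt (∑ i, gp i ^ 2) := by
    rw [EuclideanSpace.norm_eq]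
    congr 1
    exact Finset.sum_congr rfl fun i _ => by rw [Real.norm_eq_abs, sq_abs]
  rw [h1]
  have h2 : (∑ i, gp i ^ 2) ≤ ∑ _i : Fin d, M₁ ^ 2 := by
    apply Finset.sum_le_sum
    intro i _
    have := grad_coord_bound f gp p hp hg hLip i
    nlinarith [abs_nonneg (gp i), sq_abs (gp i)]
  calc Real.sqrt (∑ i, gp i ^ 2) ≤ Real.sqrt (∑ _i : Fin d, M₁ ^ 2) := Real.sqrt_le_sqrt h2
    _ = M₁ * Real.sqrt d := by
        rw [Finset.sum_const, Finset.card_univ, Fintype.card_fin, nsmul_eq_mul]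
        rw [show (d : ℝ) * M₁ ^ 2 = M₁ ^ 2 * d by ring, Real.sqrt_mul (sq_nonneg M₁),
          Real.sqrt_sq hM]

/-- `f (a ⊔ y) ≥ (1-m) f y` for up-concave nonneg `f`, where `a i ≤ m ≤ 1`. -/
lemma cross_lemma (f : EuclideanSpace ℝ (Fin d) → ℝ) (g : EuclideanSpace ℝ (Fin d) → EuclideanSpace ℝ (Fin d))
    (hnonneg : ∀ x ∈ unitBox d, 0 ≤ f x)
    (hupconcave : ∀ a ∈ unitBox d, ∀ b ∈ unitBox d, (∀ i, a i ≤ b i) →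
      ⟪g b, b - a⟫ ≤ f b - f a ∧ f b - f a ≤ ⟪g a, b - a⟫)
    (a y : EuclideanSpace ℝ (Fin d)) (ha : a ∈ unitBox d) (hy : y ∈ unitBox d)
    (m : ℝ) (hm0 : 0 ≤ m) (hm1 : m ≤ 1) (ham : ∀ i, a i ≤ m) :
    (1 - m) * f y ≤ f (WithLp.toLp 2 (fun i => max (a i) (y i))) := by
  set q : EuclideanSpace ℝ (Fin d) := WithLp.toLp 2 (fun i => max (a i) (y i)) with hq
  have hqi : ∀ i, q i = max (a i) (y i) := fun i => rfl
  have hqbox : q ∈ unitBox d := by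
    intro i
    rw [hqi]
    exact ⟨le_max_of_le_left (ha i).1, max_le (ha i).2 (hy i).2⟩
  rcases eq_or_lt_of_le hm1 with h1 | hmlt1
  · rw [← h1]; simpa using hnonneg q hqbox
  rcases eq_or_lt_of_le hm0 with h0 | hmpos
  · -- m = 0, so a i = 0 and q = y
    have : q = y := by
      ext i
      rw [hqi]
      have := ham i
      have := (ha i).1
      have := (hy i).1
      rw [max_eq_right]; linarith
    rw [this, ← h0]; linarith
  · set p : EuclideanSpace ℝ (Fin d) := y + m⁻¹ • (q - y) with hp
    have hpi : ∀ i, p i = y i + m⁻¹ * (q i - y i) := by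
      intro i; simp [hp, PiLp.add_apply, PiLp.smul_apply, PiLp.sub_apply]
    have hyq : ∀ i, y i ≤ q i := fun i => le_max_right _ _
    have hqp : ∀ i, q i ≤ p i := by
      intro i
      rw [hpi]
      have h1 : 1 ≤ m⁻¹ := one_le_inv_iff₀.mpr ⟨hmpos, hm1⟩
      nlinarith [hyq i, sub_nonneg.mpr (hyq i)]
    have hpbox : p ∈ unitBox d := by
      intro i
      rw [hpi]
      constructor
      · have h1 := hyq i
        have h2 := (hy i).1
        have : 0 ≤ m⁻¹ * (q i - y i) :=
          mul_nonneg (inv_nonneg.mpr hm0) (sub_nonneg.mpr h1)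
        linarith
      · -- q i - y i ≤ m * (1 - y i)
        have hkey : q i - y i ≤ m * (1 - y i) := by
          rw [hqi]
          rcases max_cases (a i) (y i) with ⟨hv, _⟩ | ⟨hv, _⟩
          · rw [hv]
            have h1 := ham i
            have h2 := (hy i).1
            have h3 := (hy i).2
            nlinarith
          · rw [hv]
            have h3 := (hy i).2
            nlinarith [(hy i).1]
        have := (hy i).2
        have h4 : m⁻¹ * (q i - y i) ≤ m⁻¹ * (m * (1 - y i)) := by
          apply mul_le_mul_of_nonneg_left hkey (by positivity)
        rw [inv_mul_cancel_left₀ (ne_of_gt hmpos)] at h4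
        linarith
    -- main up-concavity argument
    have H1 := (hupconcave y hy q hqbox hyq).1
    have H2 := (hupconcave q hqbox p hpbox hqp).2
    have hfp : 0 ≤ f p := hnonneg p hpbox
    have hpq : p - q = (m⁻¹ - 1) • (q - y) := by
      rw [hp]
      module
    rw [hpq, real_inner_smul_right] at H2
    set s : ℝ := ⟪g q, q - y⟫ with hs
    have hm1' : 0 ≤ m⁻¹ - 1 := by
      have : 1 ≤ m⁻¹ := one_le_inv_iff₀.mpr ⟨hmpos, hm1⟩
      linarith
    -- s ≤ f q - f y,  f p - f q ≤ (m⁻¹ - 1) * s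
    have hstep : f p - f q ≤ (m⁻¹ - 1) * (f q - f y) := by
      calc f p - f q ≤ (m⁻¹ - 1) * s := H2
        _ ≤ (m⁻¹ - 1) * (f q - f y) := mul_le_mul_of_nonneg_left H1 hm1'
    have hmul := mul_le_mul_of_nonneg_left hstep hm0
    have hexp : m * ((m⁻¹ - 1) * (f q - f y)) = (1 - m) * (f q - f y) := by
      field_simp
    have hnn : 0 ≤ m * f p := mul_nonneg hm0 hfp
    nlinarith [hmul, hexp, hnn]

/-- Lemma A: `f(a⊔y) + f(a⊓y) - 2 f(a) ≤ ⟪g a, y - a⟫`. -/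
lemma inner_lower (f : EuclideanSpace ℝ (Fin d) → ℝ)
    (g : EuclideanSpace ℝ (Fin d) → EuclideanSpace ℝ (Fin d))
    (hupconcave : ∀ a ∈ unitBox d, ∀ b ∈ unitBox d, (∀ i, a i ≤ b i) →
      ⟪g b, b - a⟫ ≤ f b - f a ∧ f b - f a ≤ ⟪g a, b - a⟫)
    (a y : EuclideanSpace ℝ (Fin d)) (ha : a ∈ unitBox d) (hy : y ∈ unitBox d) :
    f (WithLp.toLp 2 (fun i => max (a i) (y i))) + f (WithLp.toLp 2 (fun i => min (a i) (y i))) - 2 * f a ≤ ⟪g a, y - a⟫ := by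
  set q : EuclideanSpace ℝ (Fin d) := WithLp.toLp 2 (fun i => max (a i) (y i)) with hqdef
  set r : EuclideanSpace ℝ (Fin d) := WithLp.toLp 2 (fun i => min (a i) (y i)) with hrdef
  have hqbox : q ∈ unitBox d := fun i =>
    ⟨le_max_of_le_left (ha i).1, max_le (ha i).2 (hy i).2⟩
  have hrbox : r ∈ unitBox d := fun i =>
    ⟨le_min (ha i).1 (hy i).1, min_le_of_left_le (ha i).2⟩
  have haq : ∀ i, a i ≤ q i := fun i => le_max_left _ _
  have hra : ∀ i, r i ≤ a i := fun i => min_le_left _ _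
  have H1 := (hupconcave a ha q hqbox haq).2   -- f q - f a ≤ ⟪g a, q - a⟫
  have H2 := (hupconcave r hrbox a ha hra).1   -- ⟪g a, a - r⟫ ≤ f a - f r
  have hid : y - a = (q - a) - (a - r) := by
    ext i
    have h1 : q i = max (a i) (y i) := rfl
    have h2 : r i = min (a i) (y i) := rfl
    show y i - a i = (q i - a i) - (a i - r i)
    rw [h1, h2]
    rcases le_total (a i) (y i) with h | h
    · rw [max_eq_right h, min_eq_left h]; ring
    · rw [max_eq_left h, min_eq_right h]; ring
  have : ⟪g a, y - a⟫ = ⟪g a, q - a⟫ - ⟪g a, a - r⟫ := by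
    rw [hid, inner_sub_right]
  rw [this]
  linarith

lemma supNorm_nonneg (u : EuclideanSpace ℝ (Fin d)) : 0 ≤ supNorm u :=
  Real.iSup_nonneg fun i => abs_nonneg _

lemma supNorm_le_one {u : EuclideanSpace ℝ (Fin d)} (hu : u ∈ unitBox d) : supNorm u ≤ 1 :=
  Real.iSup_le (fun i => abs_le.mpr ⟨by linarith [(hu i).1], (hu i).2⟩) zero_le_one

lemma le_supNorm (u : EuclideanSpace ℝ (Fin d)) (i : Fin d) : u i ≤ supNorm u := by
  refine le_trans (le_abs_self _) ?_
  show |u i| ≤ ⨆ j, |u j|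
  exact le_ciSup (Set.Finite.bddAbove (Set.finite_range fun j => |u j|)) i

lemma curve_mem {x u : EuclideanSpace ℝ (Fin d)} (hx : x ∈ unitBox d) (hu : u ∈ unitBox d)
    {z : ℝ} (hz : z ∈ Set.Icc (0:ℝ) 1) : (z / 2) • (x - u) + u ∈ unitBox d := by
  intro i
  have hco : ((z / 2) • (x - u) + u) i = (z/2) * (x i - u i) + u i := by
    simp [PiLp.add_apply, PiLp.smul_apply, PiLp.sub_apply]
  rw [hco]
  have h1 := (hx i).1; have h2 := (hx i).2
  have h3 := (hu i).1; have h4 := (hu i).2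
  have hz1 := hz.1; have hz2 := hz.2
  constructor
  · nlinarith
  · nlinarith

/-- Pointwise bound at the curve point. -/
lemma pointwise_bound (f : EuclideanSpace ℝ (Fin d) → ℝ)
    (g : EuclideanSpace ℝ (Fin d) → EuclideanSpace ℝ (Fin d))
    (hnonneg : ∀ x ∈ unitBox d, 0 ≤ f x)
    (hupconcave : ∀ a ∈ unitBox d, ∀ b ∈ unitBox d, (∀ i, a i ≤ b i) →
      ⟪g b, b - a⟫ ≤ f b - f a ∧ f b - f a ≤ ⟪g a, b - a⟫)
    (x y u : EuclideanSpace ℝ (Fin d)) (hx : x ∈ unitBox d) (hy : y ∈ unitBox d)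
    (hu : u ∈ unitBox d) {z : ℝ} (hz : z ∈ Set.Icc (0:ℝ) 1) :
    (1 - z/2) * (1 - supNorm u) * f y - 2 * f ((z / 2) • (x - u) + u)
      - (1 - z/2) * ⟪g ((z / 2) • (x - u) + u), x - u⟫
    ≤ ⟪g ((z / 2) • (x - u) + u), y - x⟫ := by
  set a : EuclideanSpace ℝ (Fin d) := (z / 2) • (x - u) + u with hadef
  have habox : a ∈ unitBox d := curve_mem hx hu hz
  set m : ℝ := z/2 + (1 - z/2) * supNorm u with hm
  have hsu0 := supNorm_nonneg u
  have hsu1 := supNorm_le_one hu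
  have hz1 := hz.1; have hz2 := hz.2
  have hm0 : 0 ≤ m := by rw [hm]; nlinarith
  have hm1 : m ≤ 1 := by rw [hm]; nlinarith
  have ham : ∀ i, a i ≤ m := by
    intro i
    have hco : a i = (z/2) * (x i - u i) + u i := by
      simp [hadef, PiLp.add_apply, PiLp.smul_apply, PiLp.sub_apply]
    rw [hco, hm]
    have h2 := (hx i).2
    have h3 := le_supNorm u i
    nlinarith [(hx i).1, (hu i).1]
  have hcross := cross_lemma f g hnonneg hupconcave a y habox hy m hm0 hm1 ham
  have hlow := inner_lower f g hupconcave a y habox hy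
  have hminbox : (WithLp.toLp 2 (fun i => min (a i) (y i)) : EuclideanSpace ℝ (Fin d)) ∈ unitBox d := fun i =>
    ⟨le_min (habox i).1 (hy i).1, min_le_of_left_le (habox i).2⟩
  have hminnn := hnonneg _ hminbox
  have h1m : 1 - m = (1 - z/2) * (1 - supNorm u) := by rw [hm]; ring
  -- ⟪g a, y - a⟫ ≥ (1-z/2)(1-supNorm u) f y - 2 f a
  have hya : (1 - z/2) * (1 - supNorm u) * f y - 2 * f a ≤ ⟪g a, y - a⟫ := by
    rw [← h1m]
    linarith
  have hxdec : y - x = (y - a) - (1 - z/2) • (x - u) := by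
    rw [hadef]; module
  have : ⟪g a, y - x⟫ = ⟪g a, y - a⟫ - (1 - z/2) * ⟪g a, x - u⟫ := by
    rw [hxdec, inner_sub_right, real_inner_smul_right]
  rw [this]
  linarith

/-- Derivative of `φ z = f ((z/2)•(x-u) + u)`. -/
lemma phi_hasDerivAt (f : EuclideanSpace ℝ (Fin d) → ℝ)
    (g : EuclideanSpace ℝ (Fin d) → EuclideanSpace ℝ (Fin d))
    (hderiv : ∀ x ∈ unitBox d, HasGradientAt f (g x) x)
    (x u : EuclideanSpace ℝ (Fin d)) (hx : x ∈ unitBox d) (hu : u ∈ unitBox d)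
    {z : ℝ} (hz : z ∈ Set.Icc (0:ℝ) 1) :
    HasDerivAt (fun t : ℝ => f ((t / 2) • (x - u) + u))
      ((1/2) * ⟪g ((z / 2) • (x - u) + u), x - u⟫) z := by
  set a : EuclideanSpace ℝ (Fin d) := (z / 2) • (x - u) + u with hadef
  have habox : a ∈ unitBox d := curve_mem hx hu hz
  have h1 : HasDerivAt (fun t : ℝ => (t / 2) • (x - u) + u) ((1/2 : ℝ) • (x - u)) z := by
    have : HasDerivAt (fun t : ℝ => t / 2) (1/2 : ℝ) z := (hasDerivAt_id z).div_const 2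
    simpa using (this.smul_const (x - u)).add_const u
  have h2 : HasFDerivAt f ((InnerProductSpace.toDual ℝ (EuclideanSpace ℝ (Fin d))) (g a))
      ((z / 2) • (x - u) + u) := (hderiv a habox).hasFDerivAt
  have := h2.comp_hasDerivAt z h1
  simp [InnerProductSpace.toDual_apply_apply, real_inner_smul_right, mul_comm, Function.comp_def] at this ⊢
  exact this

section Meas
open MeasureTheory

variable (f : EuclideanSpace ℝ (Fin d) → ℝ)
  (g : EuclideanSpace ℝ (Fin d) → EuclideanSpace ℝ (Fin d))
  (x u : EuclideanSpace ℝ (Fin d))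

lemma curve_continuous : Continuous (fun z : ℝ => (z / 2) • (x - u) + u) :=
  (((continuous_id.div_const 2).smul continuous_const).add continuous_const)

lemma aesm_grad (hderiv : ∀ p ∈ unitBox d, HasGradientAt f (g p) p)
    (hx : x ∈ unitBox d) (hu : u ∈ unitBox d) :
    AEStronglyMeasurable (fun z : ℝ => g ((z / 2) • (x - u) + u))
      (MeasureTheory.volume.restrict (Set.Ioc (0:ℝ) 1)) := by
  set T := InnerProductSpace.toDual ℝ (EuclideanSpace ℝ (Fin d)) with hT
  have hmeas : Measurable (fun z : ℝ => T.symm (fderiv ℝ f ((z / 2) • (x - u) + u))) := by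
    exact (T.symm.continuous.measurable).comp
      ((measurable_fderiv ℝ f).comp (curve_continuous x u).measurable)
  apply (hmeas.aestronglyMeasurable).congr
  rw [Filter.EventuallyEq, MeasureTheory.ae_restrict_iff' measurableSet_Ioc]
  apply MeasureTheory.ae_of_all
  intro z hz
  have hzIcc : z ∈ Set.Icc (0:ℝ) 1 := ⟨hz.1.le, hz.2⟩
  have habox := curve_mem hx hu hzIcc
  have hfd : fderiv ℝ f ((z / 2) • (x - u) + u) = T (g ((z / 2) • (x - u) + u)) :=
    (hderiv _ habox).hasFDerivAt.fderiv
  rw [hfd, T.symm_apply_apply]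

variable {M₁ : ℝ}

lemma vector_integrable (hM : 0 ≤ M₁)
    (hderiv : ∀ p ∈ unitBox d, HasGradientAt f (g p) p)
    (hLip : ∀ a ∈ unitBox d, ∀ b ∈ unitBox d, |f a - f b| ≤ M₁ * ‖a - b‖)
    (hx : x ∈ unitBox d) (hu : u ∈ unitBox d) :
    IntervalIntegrable (fun z : ℝ => (1 / (3 * (1 - z / 2) ^ 3)) • g ((z / 2) • (x - u) + u))
      MeasureTheory.volume 0 1 := by
  rw [intervalIntegrable_iff_integrableOn_Ioc_of_le zero_le_one]
  apply MeasureTheory.Integrable.mono' (g := fun _ => (8/3) * (M₁ * Real.sqrt d))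
      (MeasureTheory.integrable_const _)
  · have hw : Measurable (fun z : ℝ => 1 / (3 * (1 - z / 2) ^ 3)) := by
      apply Measurable.div measurable_const
      exact (measurable_const.mul (((measurable_const.sub
        (measurable_id.div_const 2))).pow measurable_const))
    exact (hw.aemeasurable.aestronglyMeasurable.smul (aesm_grad f g x u hderiv hx hu))
  · rw [MeasureTheory.ae_restrict_iff' measurableSet_Ioc]
    apply MeasureTheory.ae_of_all
    intro z hz
    have hzIcc : z ∈ Set.Icc (0:ℝ) 1 := ⟨hz.1.le, hz.2⟩
    have habox := curve_mem hx hu hzIcc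
    have hg : ‖g ((z / 2) • (x - u) + u)‖ ≤ M₁ * Real.sqrt d :=
      grad_norm_bound hM f _ _ habox (hderiv _ habox) hLip
    rw [norm_smul]
    have h0 : (1:ℝ)/2 ≤ 1 - z/2 := by linarith [hz.2]
    have h1 : (1:ℝ)/8 ≤ (1 - z/2)^3 := by
      calc (1:ℝ)/8 = (1/2)^3 := by norm_num
        _ ≤ (1 - z/2)^3 := pow_le_pow_left₀ (by norm_num) h0 3
    have h2 : ‖(1 / (3 * (1 - z / 2) ^ 3) : ℝ)‖ ≤ 8/3 := by
      rw [Real.norm_eq_abs, abs_of_nonneg (by positivity)]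
      rw [div_le_iff₀ (by nlinarith)]
      nlinarith
    have h3 : (0:ℝ) ≤ M₁ * Real.sqrt d := by positivity
    calc ‖(1 / (3 * (1 - z / 2) ^ 3) : ℝ)‖ * ‖g ((z / 2) • (x - u) + u)‖
        ≤ (8/3) * (M₁ * Real.sqrt d) := by
          apply mul_le_mul h2 hg (norm_nonneg _) (by norm_num)

lemma scalar_integrable (hM : 0 ≤ M₁)
    (hderiv : ∀ p ∈ unitBox d, HasGradientAt f (g p) p)
    (hLip : ∀ a ∈ unitBox d, ∀ b ∈ unitBox d, |f a - f b| ≤ M₁ * ‖a - b‖)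
    (hx : x ∈ unitBox d) (hu : u ∈ unitBox d)
    (c : ℝ → ℝ) (hc : Measurable c) (C : ℝ)
    (hC : ∀ z ∈ Set.Ioc (0:ℝ) 1, |c z| ≤ C) (v : EuclideanSpace ℝ (Fin d)) :
    IntervalIntegrable (fun z : ℝ => c z * ⟪g ((z / 2) • (x - u) + u), v⟫)
      MeasureTheory.volume 0 1 := by
  rw [intervalIntegrable_iff_integrableOn_Ioc_of_le zero_le_one]
  apply MeasureTheory.Integrable.mono' (g := fun _ => C * (M₁ * Real.sqrt d * ‖v‖))
      (MeasureTheory.integrable_const _)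
  · exact (hc.aemeasurable.aestronglyMeasurable.mul
      ((aesm_grad f g x u hderiv hx hu).inner aestronglyMeasurable_const))
  · rw [MeasureTheory.ae_restrict_iff' measurableSet_Ioc]
    apply MeasureTheory.ae_of_all
    intro z hz
    have hzIcc : z ∈ Set.Icc (0:ℝ) 1 := ⟨hz.1.le, hz.2⟩
    have habox := curve_mem hx hu hzIcc
    have hg : ‖g ((z / 2) • (x - u) + u)‖ ≤ M₁ * Real.sqrt d :=
      grad_norm_bound hM f _ _ habox (hderiv _ habox) hLip
    rw [Real.norm_eq_abs, abs_mul]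
    have hinner : |⟪g ((z / 2) • (x - u) + u), v⟫| ≤ M₁ * Real.sqrt d * ‖v‖ := by
      calc |⟪g ((z / 2) • (x - u) + u), v⟫| ≤ ‖g ((z / 2) • (x - u) + u)‖ * ‖v‖ :=
            abs_real_inner_le_norm _ _
        _ ≤ M₁ * Real.sqrt d * ‖v‖ := by
            apply mul_le_mul_of_nonneg_right hg (norm_nonneg _)
    apply mul_le_mul (hC z hz) hinner (abs_nonneg _)
    exact le_trans (abs_nonneg _) (hC z hz)

end Meas


/-- Boosting lemma for non-monotone up-concave functions: with
`F(x) = ∫₀¹ [2/(3z(1−z/2)³)] (f((z/2)·(x−u)+u) − f(u)) dz` and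
`∇F(x) = ∫₀¹ [1/(3(1−z/2)³)] ∇f((z/2)·(x−u)+u) dz`, for all `x, y ∈ [0,1]^d`,
`((1 − ‖u‖_∞)/4) f(y) − f((x+u)/2) ≤ (3/8) ⟨∇F(x), y − x⟩`. -/
theorem boosting_nonmonotone_upConcave
    (d : ℕ) (M₁ : ℝ) (hM : 0 ≤ M₁)
    (f : EuclideanSpace ℝ (Fin d) → ℝ)
    (g gF : EuclideanSpace ℝ (Fin d) → EuclideanSpace ℝ (Fin d))
    (hderiv : ∀ x ∈ unitBox d, HasGradientAt f (g x) x)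
    (hnonneg : ∀ x ∈ unitBox d, 0 ≤ f x)
    (hupconcave : ∀ a ∈ unitBox d, ∀ b ∈ unitBox d, (∀ i, a i ≤ b i) →
      ⟪g b, b - a⟫ ≤ f b - f a ∧ f b - f a ≤ ⟪g a, b - a⟫)
    (hLip : ∀ a ∈ unitBox d, ∀ b ∈ unitBox d, |f a - f b| ≤ M₁ * ‖a - b‖)
    (u : EuclideanSpace ℝ (Fin d)) (hu : u ∈ unitBox d)
    (hgF : ∀ x, gF x =
      ∫ z in (0 : ℝ)..1, (1 / (3 * (1 - z / 2) ^ 3)) • g ((z / 2) • (x - u) + u)) :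
    ∀ x ∈ unitBox d, ∀ y ∈ unitBox d,
      (1 - supNorm u) / 4 * f y - f ((1 / 2 : ℝ) • (x + u)) ≤ 3 / 8 * ⟪gF x, y - x⟫ := by
  intro x hx y hy
  have hInt := vector_integrable f g x u hM hderiv hLip hx hu
  -- Step 2: swap inner and integral
  have hswap : ⟪gF x, y - x⟫
      = ∫ z in (0:ℝ)..1, (1 / (3 * (1 - z / 2) ^ 3)) * ⟪g ((z / 2) • (x - u) + u), y - x⟫ := by
    have h1 := (innerSL ℝ (y - x)).intervalIntegral_comp_comm hInt
    simp only [innerSL_apply_apply] at h1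
    rw [real_inner_comm, hgF x, ← h1]
    apply intervalIntegral.integral_congr
    intro z _
    simp only [real_inner_smul_right]
    rw [real_inner_comm]
  set A : ℝ := (1 - supNorm u) * f y with hA
  set Ψ' : ℝ → ℝ := fun z => ((1/2) / (1 - z/2)^2) * ⟪g ((z / 2) • (x - u) + u), x - u⟫
      + f ((z / 2) • (x - u) + u) * ((1 - z/2)^3)⁻¹ with hΨ'
  -- derivative of Ψ
  have hne : ∀ z : ℝ, z ∈ Set.Icc (0:ℝ) 1 → (1 - z/2) ≠ 0 := by
    intro z hz
    have := hz.2
    intro h; nlinarith [hz.1]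
  have hΨderiv : ∀ z ∈ Set.uIcc (0:ℝ) 1,
      HasDerivAt (fun t => f ((t / 2) • (x - u) + u) * ((1 - t/2)^2)⁻¹) (Ψ' z) z := by
    intro z hz
    rw [Set.uIcc_of_le zero_le_one] at hz
    have hzne := hne z hz
    have hφ' := phi_hasDerivAt f g hderiv x u hx hu hz
    have hbase : HasDerivAt (fun t : ℝ => (1 - t/2)^2) (-(1 - z/2)) z := by
      have h0 : HasDerivAt (fun t : ℝ => 1 - t/2) (-(1/2) : ℝ) z := by
        simpa using ((hasDerivAt_id z).div_const 2).const_sub 1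
      have := h0.pow 2
      refine this.congr_deriv ?_
      ring
    have hq : HasDerivAt (fun t : ℝ => ((1 - t/2)^2)⁻¹) ((1 - z/2) / ((1-z/2)^2)^2) z := by
      have := hbase.inv (pow_ne_zero 2 hzne)
      refine this.congr_deriv ?_
      ring
    have hmul := hφ'.mul hq
    refine hmul.congr_deriv ?_
    simp only [hΨ']
    generalize ⟪g ((z / 2) • (x - u) + u), x - u⟫ = G
    generalize f ((z / 2) • (x - u) + u) = P
    generalize hc : (1 - z/2 : ℝ) = c
    rw [hc] at hzne
    field_simp
  -- integrability of Ψ'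
  have hφcont : ContinuousOn (fun z : ℝ => f ((z / 2) • (x - u) + u)) (Set.Icc (0:ℝ) 1) :=
    fun z hz => (phi_hasDerivAt f g hderiv x u hx hu hz).continuousAt.continuousWithinAt
  have hc1meas : Measurable (fun z : ℝ => (1/2 : ℝ) / (1 - z/2)^2) :=
    measurable_const.div ((measurable_const.sub (measurable_id.div_const 2)).pow measurable_const)
  have hc1bd : ∀ z ∈ Set.Ioc (0:ℝ) 1, |(1/2 : ℝ) / (1 - z/2)^2| ≤ 2 := by
    intro z hz
    have h0 : (1:ℝ)/2 ≤ 1 - z/2 := by linarith [hz.2]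
    have h1 : (1:ℝ)/4 ≤ (1 - z/2)^2 := by nlinarith
    rw [abs_of_nonneg (by positivity), div_le_iff₀ (by positivity)]
    nlinarith
  have hΨint : IntervalIntegrable Ψ' MeasureTheory.volume 0 1 := by
    apply IntervalIntegrable.add
    · exact scalar_integrable f g x u hM hderiv hLip hx hu _ hc1meas 2 hc1bd (x - u)
    · apply ContinuousOn.intervalIntegrable
      rw [Set.uIcc_of_le zero_le_one]
      apply hφcont.mul
      apply ContinuousOn.inv₀
      · exact (((continuous_const.sub (continuous_id.div_const 2)).pow 3)).continuousOn
      · intro z hz; exact pow_ne_zero 3 (hne z hz)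
  -- FTC for Ψ
  have hFTC2 : ∫ z in (0:ℝ)..1, Ψ' z
      = 4 * f ((1/2 : ℝ) • (x - u) + u) - f u := by
    rw [intervalIntegral.integral_eq_sub_of_hasDerivAt hΨderiv hΨint]
    norm_num
    ring
  -- FTC for the weight
  have hW2int : IntervalIntegrable (fun z : ℝ => 1 / (3 * (1 - z/2)^2))
      MeasureTheory.volume 0 1 := by
    apply ContinuousOn.intervalIntegrable
    rw [Set.uIcc_of_le zero_le_one]
    apply ContinuousOn.div continuousOn_const
    · exact (continuous_const.mul ((continuous_const.sub (continuous_id.div_const 2)).pow 2)).continuousOn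
    · intro z hz
      have := hne z hz
      positivity
  have hFTC1 : ∫ z in (0:ℝ)..1, 1 / (3 * (1 - z/2)^2) = 2/3 := by
    have hd : ∀ z ∈ Set.uIcc (0:ℝ) 1,
        HasDerivAt (fun t : ℝ => (2/3) * (1 - t/2)⁻¹) (1 / (3 * (1 - z/2)^2)) z := by
      intro z hz
      rw [Set.uIcc_of_le zero_le_one] at hz
      have hzne := hne z hz
      have h0 : HasDerivAt (fun t : ℝ => 1 - t/2) (-(1/2) : ℝ) z := by
        simpa using ((hasDerivAt_id z).div_const 2).const_sub 1
      have := (h0.inv hzne).const_mul (2/3 : ℝ)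
      refine this.congr_deriv ?_
      generalize hc : (1 - z/2 : ℝ) = c
      rw [hc] at hzne
      field_simp
    rw [intervalIntegral.integral_eq_sub_of_hasDerivAt hd hW2int]
    norm_num
  -- pointwise bound and monotonicity
  have hRHSint := scalar_integrable f g x u hM hderiv hLip hx hu
      (fun z => 1 / (3 * (1 - z / 2) ^ 3))
      (measurable_const.div ((measurable_const.mul
        ((measurable_const.sub (measurable_id.div_const 2)).pow measurable_const))))
      (8/3)
      (by
        intro z hz
        have h0 : (1:ℝ)/2 ≤ 1 - z/2 := by linarith [hz.2]
        have h1 : (1:ℝ)/8 ≤ (1 - z/2)^3 := by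
          calc (1:ℝ)/8 = (1/2)^3 := by norm_num
            _ ≤ (1 - z/2)^3 := pow_le_pow_left₀ (by norm_num) h0 3
        rw [abs_of_nonneg (by positivity), div_le_iff₀ (by nlinarith)]
        nlinarith)
      (y - x)
  have hLBint : IntervalIntegrable (fun z : ℝ => A * (1 / (3 * (1 - z/2)^2)) - (2/3) * Ψ' z)
      MeasureTheory.volume 0 1 := (hW2int.const_mul A).sub (hΨint.const_mul (2/3))
  have hmono : ∫ z in (0:ℝ)..1, (A * (1 / (3 * (1 - z/2)^2)) - (2/3) * Ψ' z)
      ≤ ∫ z in (0:ℝ)..1, (1 / (3 * (1 - z / 2) ^ 3)) * ⟪g ((z / 2) • (x - u) + u), y - x⟫ := by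
    apply intervalIntegral.integral_mono_on zero_le_one hLBint hRHSint
    intro z hz
    have hzne := hne z hz
    have hpw := pointwise_bound f g hnonneg hupconcave x y u hx hy hu hz
    have hwpos : (0:ℝ) < 1 / (3 * (1 - z/2)^3) := by
      have h0 : (1:ℝ)/2 ≤ 1 - z/2 := by linarith [hz.2]
      positivity
    have hkey := mul_le_mul_of_nonneg_left hpw hwpos.le
    have hLHSeq : A * (1 / (3 * (1 - z/2)^2)) - (2/3) * Ψ' z
        = (1 / (3 * (1 - z/2)^3)) * ((1 - z/2) * (1 - supNorm u) * f y
            - 2 * f ((z / 2) • (x - u) + u)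
            - (1 - z/2) * ⟪g ((z / 2) • (x - u) + u), x - u⟫) := by
      simp only [hΨ', hA]
      generalize ⟪g ((z / 2) • (x - u) + u), x - u⟫ = G
      generalize f ((z / 2) • (x - u) + u) = P
      generalize hfy : f y = Q
      generalize hc : (1 - z/2 : ℝ) = c
      rw [hc] at hzne
      field_simp
      ring
    rw [hLHSeq]
    exact hkey
  -- compute the left integral
  have hLBval : ∫ z in (0:ℝ)..1, (A * (1 / (3 * (1 - z/2)^2)) - (2/3) * Ψ' z)
      = A * (2/3) - (2/3) * (4 * f ((1/2 : ℝ) • (x - u) + u) - f u) := by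
    rw [intervalIntegral.integral_sub (hW2int.const_mul A) (hΨint.const_mul (2/3)),
      intervalIntegral.integral_const_mul, intervalIntegral.integral_const_mul,
      hFTC1, hFTC2]
  rw [hswap]
  have hfu : 0 ≤ f u := hnonneg u hu
  have hmid : (1/2 : ℝ) • (x + u) = (1/2 : ℝ) • (x - u) + u := by module
  rw [hmid]
  have hbig : A * (2/3) - (2/3) * (4 * f ((1/2 : ℝ) • (x - u) + u) - f u)
      ≤ ∫ z in (0:ℝ)..1, (1 / (3 * (1 - z / 2) ^ 3)) * ⟪g ((z / 2) • (x - u) + u), y - x⟫ := by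
    rw [← hLBval]; exact hmono
  rw [hA] at hbig
  nlinarith [hbig, hfu]
end

section
/- Let K ⊆ R^d be a convex set, c ∈ relint(K), r > 0 with aff(K) ∩ B_r(c) ⊆ K, and 0 ≤ δ < r. Define K̂_δ := (1 − δ/r) K + (δ/r) c. Then K̂_δ is convex, K̂_δ ⊆ K, and for every x ∈ K̂_δ, the set aff(K) ∩ B_δ(x) is contained in K. -/
/-- Let `K ⊆ ℝ^d` be convex, `c ∈ relint(K)` witnessed by `r > 0` with
`aff(K) ∩ B_r(c) ⊆ K`, and `0 ≤ δ < r`. Then the shrunk set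
`K̂_δ := (1 − δ/r) K + (δ/r) c` is convex, contained in `K`, and for every `x ∈ K̂_δ`
the set `aff(K) ∩ B_δ(x)` is contained in `K`. -/
theorem shrunk_set_properties
    (d : ℕ) (K : Set (EuclideanSpace ℝ (Fin d))) (hK : Convex ℝ K)
    (c : EuclideanSpace ℝ (Fin d)) (hc : c ∈ K)
    (r δ : ℝ) (hr : 0 < r)
    (hball : (affineSpan ℝ K : Set (EuclideanSpace ℝ (Fin d))) ∩ Metric.closedBall c r ⊆ K)
    (hδ0 : 0 ≤ δ) (hδr : δ < r) :
    Convex ℝ ((fun x => (1 - δ / r) • x + (δ / r) • c) '' K) ∧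
    (fun x => (1 - δ / r) • x + (δ / r) • c) '' K ⊆ K ∧
    ∀ x ∈ (fun x => (1 - δ / r) • x + (δ / r) • c) '' K,
      (affineSpan ℝ K : Set (EuclideanSpace ℝ (Fin d))) ∩ Metric.closedBall x δ ⊆ K := by
  set t : ℝ := δ / r with ht
  have ht0 : 0 ≤ t := div_nonneg hδ0 hr.le
  have ht1 : t < 1 := (div_lt_one hr).mpr hδr
  have hδt : δ = t * r := by rw [ht, div_mul_cancel₀ δ hr.ne']
  constructor
  · rintro _ ⟨a, ha, rfl⟩ _ ⟨b, hb, rfl⟩ s u hs hu hsu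
    exact ⟨s • a + u • b, hK ha hb hs hu hsu, by
      match_scalars <;> first | ring1 | linear_combination (-(δ * r⁻¹)) * hsu⟩
  constructor
  · rintro _ ⟨y, hy, rfl⟩
    exact hK hy hc (by linarith) ht0 (by ring)
  · rintro x ⟨y, hy, rfl⟩ z ⟨hzspan, hzball⟩
    rcases eq_or_lt_of_le hδ0 with h0 | hδpos
    · have ht0' : t = 0 := by rw [ht, ← h0]; simp
      have hd := Metric.mem_closedBall.mp hzball
      rw [← h0] at hd
      have hz : z = (1 - t) • y + t • c :=
        dist_eq_zero.mp (le_antisymm hd dist_nonneg)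
      rw [hz, ht0']
      simpa using hy
    · have htpos : 0 < t := div_pos hδpos hr
      set w := t⁻¹ • (z - y) + y with hw
      have hwspan : w ∈ (affineSpan ℝ K : Set (EuclideanSpace ℝ (Fin d))) := by
        have hyspan : y ∈ affineSpan ℝ K := subset_affineSpan ℝ K hy
        have := AffineSubspace.smul_vsub_vadd_mem (affineSpan ℝ K) t⁻¹ hzspan hyspan hyspan
        simpa [hw, vsub_eq_sub, vadd_eq_add] using this
      have hwball : w ∈ Metric.closedBall c r := by
        have hdiff : w - c = t⁻¹ • (z - ((1 - t) • y + t • c)) := by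
          rw [hw]
          match_scalars <;> (field_simp; try ring)
        rw [Metric.mem_closedBall, dist_eq_norm, hdiff, norm_smul]
        have hznorm : ‖z - ((1 - t) • y + t • c)‖ ≤ δ := by
          simpa [dist_eq_norm] using Metric.mem_closedBall.mp hzball
        calc ‖(t : ℝ)⁻¹‖ * ‖z - ((1 - t) • y + t • c)‖
            ≤ t⁻¹ * δ := by
              rw [Real.norm_eq_abs, abs_of_pos (by positivity)]
              gcongr
          _ = r := by rw [hδt]; field_simp
      have hwK : w ∈ K := hball ⟨hwspan, hwball⟩
      have hz : z = (1 - t) • y + t • w := by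
        rw [hw, smul_add, smul_smul, mul_inv_cancel₀ htpos.ne', one_smul]
        module
      rw [hz]
      exact hK hy hwK (by linarith) ht0 (by ring)
end

section
/- Let f : [0,1]^d → R be non-negative, monotone, differentiable and γ-weakly up-concave, γ ∈ (0,1]. Then for all x, y ∈ [0,1]^d and z ∈ [0,1]: ⟨∇f(z·x), y⟩ ≥ γ ( f(y) − f(z·x) ). -/
open scoped RealInnerProductSpace

lemma grad_nonneg_aux
    (d : ℕ) (f : EuclideanSpace ℝ (Fin d) → ℝ)
    (g : EuclideanSpace ℝ (Fin d) → EuclideanSpace ℝ (Fin d))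
    (hderiv : ∀ x ∈ unitBox d, HasGradientAt f (g x) x)
    (hmono : ∀ u ∈ unitBox d, ∀ v ∈ unitBox d, (∀ i, u i ≤ v i) → f u ≤ f v)
    (w : EuclideanSpace ℝ (Fin d)) (hw : w ∈ unitBox d) (i : Fin d) :
    0 ≤ g w i := by
  set e : EuclideanSpace ℝ (Fin d) := EuclideanSpace.single i (1 : ℝ) with he
  set φ : ℝ → ℝ := fun t => f (w + t • e) with hφ
  have hL : HasDerivAt (fun t : ℝ => w + t • e) e 0 := by
    simpa using ((hasDerivAt_id (0 : ℝ)).smul_const e).const_add w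
  have hc : HasDerivAt φ (g w i) 0 := by
    have h1 : HasDerivAt φ ((InnerProductSpace.toDual ℝ (EuclideanSpace ℝ (Fin d)) (g w)) e) 0 := by
      refine HasFDerivAt.comp_hasDerivAt 0 ?_ hL
      simpa using (hderiv w hw).hasFDerivAt
    have h2 : (InnerProductSpace.toDual ℝ (EuclideanSpace ℝ (Fin d)) (g w)) e = g w i := by
      simp [he, InnerProductSpace.toDual_apply_apply, EuclideanSpace.inner_single_right]
    simpa [h2] using h1
  have happly : ∀ t : ℝ, ∀ j, (w + t • e) j = w j + (if j = i then t else 0) := by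
    intro t j
    simp [he, EuclideanSpace.single_apply, PiLp.add_apply, PiLp.smul_apply, mul_comm]
  have hbox : ∀ t : ℝ, 0 ≤ w i + t → w i + t ≤ 1 → (w + t • e) ∈ unitBox d := by
    intro t h0 h1 j
    rw [happly]
    by_cases hj : j = i
    · subst hj; simpa using ⟨h0, h1⟩
    · simpa [hj] using hw j
  by_cases hwi : w i < 1
  · -- right difference quotients
    have hT : Filter.Tendsto (slope φ 0) (nhdsWithin 0 (Set.Ioi 0)) (nhds (g w i)) := by
      have := (hc.hasDerivWithinAt (s := Set.Ioi (0:ℝ)))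
      rw [hasDerivWithinAt_iff_tendsto_slope] at this
      simpa [Set.diff_singleton_eq_self (by simp : (0:ℝ) ∉ Set.Ioi (0:ℝ))] using this
    refine ge_of_tendsto hT ?_
    have hmem : Set.Ioo (0:ℝ) (1 - w i) ∈ nhdsWithin (0:ℝ) (Set.Ioi 0) :=
      Ioo_mem_nhdsGT_of_mem ⟨le_refl _, by linarith⟩
    filter_upwards [hmem] with t ht
    have htb : (w + t • e) ∈ unitBox d :=
      hbox t (by have := (hw i).1; linarith [ht.1]) (by linarith [ht.2])
    have hle : φ 0 ≤ φ t := by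
      refine hmono _ (by simpa using hw) _ htb ?_
      intro j; rw [happly, happly]
      by_cases h : j = i
      · simp only [h, if_pos]; linarith [ht.1]
      · simp [h]
    rw [slope_def_field]
    exact div_nonneg (by linarith) (by linarith [ht.1])
  · -- w i = 1 > 0, left difference quotients
    have hwi1 : (0:ℝ) < w i := by have := (hw i).2; linarith [not_lt.mp hwi]
    have hT : Filter.Tendsto (slope φ 0) (nhdsWithin 0 (Set.Iio 0)) (nhds (g w i)) := by
      have := (hc.hasDerivWithinAt (s := Set.Iio (0:ℝ)))
      rw [hasDerivWithinAt_iff_tendsto_slope] at this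
      simpa [Set.diff_singleton_eq_self (by simp : (0:ℝ) ∉ Set.Iio (0:ℝ))] using this
    refine ge_of_tendsto hT ?_
    have hmem : Set.Ioo (-(w i)) (0:ℝ) ∈ nhdsWithin (0:ℝ) (Set.Iio 0) :=
      Ioo_mem_nhdsLT_of_mem ⟨by linarith, le_refl _⟩
    filter_upwards [hmem] with t ht
    have htb : (w + t • e) ∈ unitBox d :=
      hbox t (by linarith [ht.1]) (by have := (hw i).2; linarith [ht.2])
    have hle : φ t ≤ φ 0 := by
      refine hmono _ htb _ (by simpa using hw) ?_
      intro j; rw [happly, happly]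
      by_cases h : j = i
      · simp only [h, if_pos]; linarith [ht.2]
      · simp [h]
    rw [slope_def_field]
    exact div_nonneg_iff.mpr (Or.inr ⟨by linarith, by linarith [ht.2]⟩)

/-- For `f : [0,1]^d → ℝ` non-negative, monotone, differentiable and `γ`-weakly up-concave,
`γ ∈ (0,1]`: for all `x, y ∈ [0,1]^d` and `z ∈ [0,1]`,
`⟨∇f(z·x), y⟩ ≥ γ(f(y) − f(z·x))`. -/
theorem inner_grad_lower_bound
    (d : ℕ) (γ : ℝ) (hγ0 : 0 < γ) (hγ1 : γ ≤ 1)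
    (f : EuclideanSpace ℝ (Fin d) → ℝ)
    (g : EuclideanSpace ℝ (Fin d) → EuclideanSpace ℝ (Fin d))
    (hderiv : ∀ x ∈ unitBox d, HasGradientAt f (g x) x)
    (hnonneg : ∀ x ∈ unitBox d, 0 ≤ f x)
    (hmono : ∀ u ∈ unitBox d, ∀ v ∈ unitBox d, (∀ i, u i ≤ v i) → f u ≤ f v)
    (hupconcave : ∀ u ∈ unitBox d, ∀ v ∈ unitBox d, (∀ i, u i ≤ v i) →
      γ * ⟪g v, v - u⟫ ≤ f v - f u ∧ f v - f u ≤ (1 / γ) * ⟪g u, v - u⟫) :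
    ∀ x ∈ unitBox d, ∀ y ∈ unitBox d, ∀ z ∈ Set.Icc (0 : ℝ) 1,
      γ * (f y - f (z • x)) ≤ ⟪g (z • x), y⟫ := by
  intro x hx y hy z hz
  set w : EuclideanSpace ℝ (Fin d) := z • x with hwdef
  have hw : w ∈ unitBox d := by
    intro i
    have hxi := hx i
    constructor
    · simpa [hwdef] using mul_nonneg hz.1 hxi.1
    · calc (w : EuclideanSpace ℝ (Fin d)) i = z * x i := by simp [hwdef]
        _ ≤ 1 * 1 := mul_le_mul hz.2 hxi.2 hxi.1 zero_le_one
        _ = 1 := one_mul 1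
  set m : EuclideanSpace ℝ (Fin d) := WithLp.toLp 2 (fun j => max (y j) (w j)) with hmdef
  have hm : m ∈ unitBox d := by
    intro i
    exact ⟨le_max_of_le_left (hy i).1, max_le (hy i).2 (hw i).2⟩
  have hwm : ∀ i, w i ≤ m i := fun i => le_max_right _ _
  have hym : ∀ i, y i ≤ m i := fun i => le_max_left _ _
  have hfy : f y ≤ f m := hmono y hy m hm hym
  have hconc := (hupconcave w hw m hm hwm).2
  have hg : ∀ i, 0 ≤ g w i := grad_nonneg_aux d f g hderiv hmono w hw
  have hinner : ⟪g w, m - w⟫ ≤ ⟪g w, y⟫ := by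
    rw [PiLp.inner_apply, PiLp.inner_apply]
    apply Finset.sum_le_sum
    intro i _
    simp only [RCLike.inner_apply, conj_trivial, PiLp.sub_apply]
    apply mul_le_mul_of_nonneg_right _ (hg i)
    have : m i - w i = max (y i) (w i) - w i := by simp [hmdef]
    rw [this]
    rcases le_total (y i) (w i) with h | h
    · simp [max_eq_right h]; exact (hy i).1
    · simp [max_eq_left h]; linarith [(hw i).1]
  calc γ * (f y - f w) ≤ γ * (f m - f w) := by nlinarith
    _ ≤ γ * ((1 / γ) * ⟪g w, m - w⟫) := by nlinarith
    _ = ⟪g w, m - w⟫ := by field_simp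
    _ ≤ ⟪g w, y⟫ := hinner
end
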